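/- arXiv:2401.09191 — 2 statements merged into one kernel-verified Lean document; each statement's English description precedes it below -/
import Mathlib

section
/- Let (gᵗ) be generated by the greedy Sinkhorn iteration. If iterate t satisfies D_KL(μᵢ ‖ Σ_{A∈S_K^L(i)} Pᵢ#π_A(gᵗ)) ≤ ‖μᵢ‖₁ for every i ∈ {1,…,K}, then 𝒢^L(gᵗ) − 𝒢^L(g^{t+1}) ≥ (1/7)(E_t/K)². If iterate t fails this condition for some i, then 𝒢^L(gᵗ) − 𝒢^L(g^{t+1}) ≥ min_{1≤j≤K} ‖μⱼ‖₁. -/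
open scoped ENNReal BigOperators

noncomputable section

/-- `S_K^L`: the nonempty subsets of `{1,…,K}` of size at most `L`. -/
def SKL (K L : ℕ) : Finset (Finset (Fin K)) :=
  Finset.univ.filter fun A => A.Nonempty ∧ A.card ≤ L

/-- `S_K^L(i)`: the members of `S_K^L` containing `i`. -/
def SKLi (K L : ℕ) (i : Fin K) : Finset (Finset (Fin K)) :=
  (SKL K L).filter fun A => i ∈ A

variable {K : ℕ} (𝒳 : Fin K → Type*) [∀ i, Fintype (𝒳 i)] [∀ i, DecidableEq (𝒳 i)]

/-- The `i`-th marginal `Pᵢ#π_A` of a coupling `π_A` on `𝒳^A`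
(zero when `i ∉ A`). -/
def marg (A : Finset (Fin K)) (π : ((j : A) → 𝒳 j.1) → ℝ) (i : Fin K) (xi : 𝒳 i) : ℝ :=
  if hi : i ∈ A then
    ∑ x : (j : A) → 𝒳 j.1, (if x ⟨i, hi⟩ = xi then π x else 0)
  else 0

/-- `Σ_{A ∈ S_K^L(i)} Pᵢ#π_A`, evaluated at `xi`. -/
def totMarg (L : ℕ) (π : (A : Finset (Fin K)) → ((j : A) → 𝒳 j.1) → ℝ)
    (i : Fin K) (xi : 𝒳 i) : ℝ :=
  ∑ A ∈ SKLi K L i, marg 𝒳 A (π A) i xi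

/-- The couplings `π_A(g)` induced by potentials `g`, interpreted as `0` where the
cost is `+∞`. -/
def piInd (η : ℝ) (c : (A : Finset (Fin K)) → ((j : A) → 𝒳 j.1) → ℝ≥0∞)
    (g : (i : Fin K) → 𝒳 i → ℝ) (A : Finset (Fin K)) (x : (j : A) → 𝒳 j.1) : ℝ :=
  if c A x = ⊤ then 0
  else Real.exp ((∑ j : A, g j.1 (x j) - (1 + (c A x).toReal)) / η)

/-- The dual objective `𝒢^L`. -/
def dualObj (η : ℝ) (L : ℕ) (c : (A : Finset (Fin K)) → ((j : A) → 𝒳 j.1) → ℝ≥0∞)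
    (μ : (i : Fin K) → 𝒳 i → ℝ) (g : (i : Fin K) → 𝒳 i → ℝ) : ℝ :=
  (∑ A ∈ SKL K L, ∑ x : (j : A) → 𝒳 j.1, piInd 𝒳 η c g A x)
    - (1 / η) * ∑ i : Fin K, ∑ xi : 𝒳 i, g i xi * μ i xi

/-- Unnormalized Kullback–Leibler divergence (convention `0 · log 0 = 0`). -/
def KLdiv {Z : Type*} [Fintype Z] (α β : Z → ℝ) : ℝ :=
  (∑ z, (β z - α z)) + ∑ z, α z * Real.log (α z / β z)

/-- ℓ¹ norm of a vector on a finite set. -/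
def l1 {Z : Type*} [Fintype Z] (v : Z → ℝ) : ℝ := ∑ z, |v z|

/-- `g : ℕ → potentials` is generated by the greedy Sinkhorn iteration: `g⁰ = 0`,
and at each step a coordinate `I` maximizing the KL-discrepancy of the `I`-th
marginal is updated by the Sinkhorn formula, all others kept fixed. -/
def IsGreedySinkhorn (η : ℝ) (L : ℕ)
    (c : (A : Finset (Fin K)) → ((j : A) → 𝒳 j.1) → ℝ≥0∞)
    (μ : (i : Fin K) → 𝒳 i → ℝ) (g : ℕ → (i : Fin K) → 𝒳 i → ℝ) : Prop :=
  (∀ i xi, g 0 i xi = 0) ∧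
  ∀ t : ℕ, ∃ I : Fin K,
    (∀ i : Fin K,
      KLdiv (μ i) (totMarg 𝒳 L (piInd 𝒳 η c (g t)) i) ≤
        KLdiv (μ I) (totMarg 𝒳 L (piInd 𝒳 η c (g t)) I)) ∧
    (∀ xI : 𝒳 I, g (t + 1) I xI =
      g t I xI + η * Real.log (μ I xI)
        - η * Real.log (totMarg 𝒳 L (piInd 𝒳 η c (g t)) I xI)) ∧
    (∀ i : Fin K, i ≠ I → g (t + 1) i = g t i)

/-- The marginal error `E_t` of the greedy Sinkhorn iteration. -/
def Err (η : ℝ) (L : ℕ) (c : (A : Finset (Fin K)) → ((j : A) → 𝒳 j.1) → ℝ≥0∞)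
    (μ : (i : Fin K) → 𝒳 i → ℝ) (g : ℕ → (i : Fin K) → 𝒳 i → ℝ) (t : ℕ) : ℝ :=
  ∑ i : Fin K,
    l1 (fun xi : 𝒳 i => μ i xi - totMarg 𝒳 L (piInd 𝒳 η c (g t)) i xi)

/-- `C* := maxᵢ nᵢ / n`. -/
def Cstar (n : ℝ) : ℝ := ((Finset.univ.sup fun i : Fin K => Fintype.card (𝒳 i) : ℕ) : ℝ) / n

/-- `min_{j, y} μ_j(y)`. -/
def muMin (μ : (i : Fin K) → 𝒳 i → ℝ) : ℝ :=
  sInf {v : ℝ | ∃ (j : Fin K) (y : 𝒳 j), v = μ j y}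

/-- `R̄ := L − η log min_{j,y} μ_j(y) + η L log(K C* n)`. -/
def Rbar (η : ℝ) (L : ℕ) (n : ℝ) (μ : (i : Fin K) → 𝒳 i → ℝ) : ℝ :=
  (L : ℝ) - η * Real.log (muMin 𝒳 μ) + η * L * Real.log (K * Cstar 𝒳 n * n)



section StmtAux

/-! ### Elementary analytic inequalities -/

private lemma stmt9_log_ge {t : ℝ} (ht : 0 < t) : 1 - 1/t ≤ Real.log t := by
  have h := Real.log_le_sub_one_of_pos (show (0:ℝ) < 1/t by positivity)
  rw [Real.log_div one_ne_zero ht.ne', Real.log_one] at h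
  linarith

private noncomputable def stmt9Q (t : ℝ) : ℝ := 4*(t+1)*Real.log t - 8*t + 8
private noncomputable def stmt9P (t : ℝ) : ℝ := 2*(t+2)*(t*Real.log t + 1 - t) - 3*(t-1)^2

private lemma stmt9_hasDerivQ {t : ℝ} (ht : 0 < t) :
    HasDerivAt stmt9Q (4*Real.log t + 4/t - 4) t := by
  have h := ((((hasDerivAt_id t).add_const 1).const_mul 4).mul (Real.hasDerivAt_log ht.ne')).sub
      ((hasDerivAt_id t).const_mul 8) |>.add_const 8
  refine h.congr_deriv ?_
  simp only [id]
  field_simp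
  ring

private lemma stmt9_hasDerivP {t : ℝ} (ht : 0 < t) : HasDerivAt stmt9P (stmt9Q t) t := by
  have hb : HasDerivAt (fun x : ℝ => x*Real.log x + 1 - x) (Real.log t + 1 - 1) t := by
    have := (((hasDerivAt_id t).mul (Real.hasDerivAt_log ht.ne')).add_const 1).sub
      (hasDerivAt_id t)
    refine this.congr_deriv ?_
    simp only [id]
    field_simp
  have h := (((hasDerivAt_id t).add_const 2).const_mul 2).mul hb |>.sub
      ((((hasDerivAt_id t).sub_const 1).pow 2).const_mul 3)
  refine h.congr_deriv ?_
  simp only [id]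
  unfold stmt9Q
  field_simp
  ring

private lemma stmt9_Qmono : MonotoneOn stmt9Q (Set.Ioi 0) := by
  apply monotoneOn_of_deriv_nonneg (convex_Ioi 0)
  · exact fun x hx => (stmt9_hasDerivQ hx).continuousAt.continuousWithinAt
  · rw [interior_Ioi]
    exact fun x hx => (stmt9_hasDerivQ hx).differentiableAt.differentiableWithinAt
  · rw [interior_Ioi]; intro x hx
    rw [(stmt9_hasDerivQ hx).deriv]
    have := stmt9_log_ge hx
    have h4 : 4 / x = 4 * (1 / x) := by ring
    rw [h4]; linarith

private lemma stmt9_key3 {t : ℝ} (ht : 0 < t) :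
    3*(t-1)^2 ≤ 2*(t+2)*(t*Real.log t + 1 - t) := by
  have hQ1 : stmt9Q 1 = 0 := by simp [stmt9Q]
  have hP1 : stmt9P 1 = 0 := by simp [stmt9P]
  have hP : 0 ≤ stmt9P t := by
    rcases le_or_gt 1 t with h1 | h1
    · have hm : MonotoneOn stmt9P (Set.Ici 1) := by
        apply monotoneOn_of_deriv_nonneg (convex_Ici 1)
        · exact fun x hx =>
            (stmt9_hasDerivP (lt_of_lt_of_le one_pos hx)).continuousAt.continuousWithinAt
        · rw [interior_Ici]
          exact fun x hx =>
            (stmt9_hasDerivP (lt_trans one_pos hx)).differentiableAt.differentiableWithinAt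
        · rw [interior_Ici]; intro x hx
          rw [(stmt9_hasDerivP (lt_trans one_pos hx)).deriv]
          have := stmt9_Qmono (Set.mem_Ioi.mpr one_pos)
            (Set.mem_Ioi.mpr (lt_trans one_pos hx)) hx.le
          rw [hQ1] at this; exact this
      have := hm Set.self_mem_Ici (Set.mem_Ici.mpr h1) h1
      rw [hP1] at this; exact this
    · have hm : AntitoneOn stmt9P (Set.Ioc 0 1) := by
        apply antitoneOn_of_deriv_nonpos (convex_Ioc 0 1)
        · exact fun x hx => (stmt9_hasDerivP hx.1).continuousAt.continuousWithinAt
        · rw [interior_Ioc]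
          exact fun x hx => (stmt9_hasDerivP hx.1).differentiableAt.differentiableWithinAt
        · rw [interior_Ioc]; intro x hx
          rw [(stmt9_hasDerivP hx.1).deriv]
          have := stmt9_Qmono (Set.mem_Ioi.mpr hx.1) (Set.mem_Ioi.mpr one_pos) hx.2.le
          rw [hQ1] at this; exact this
      have := hm (Set.mem_Ioc.mpr ⟨ht, h1.le⟩) (Set.mem_Ioc.mpr ⟨one_pos, le_refl 1⟩) h1.le
      rw [hP1] at this; exact this
  unfold stmt9P at hP
  linarith

private lemma stmt9_key2 {a b : ℝ} (ha : 0 < a) (hb : 0 < b) :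
    3*(a-b)^2 ≤ (2*a+4*b) * ((b - a) + a * Real.log (a/b)) := by
  have ht := stmt9_key3 (show (0:ℝ) < a/b by positivity)
  have h1 : 3*(a-b)^2 = b^2 * (3*(a/b-1)^2) := by field_simp
  have h2 : (2*a+4*b) * ((b - a) + a * Real.log (a/b))
      = b^2 * (2*(a/b+2)*((a/b)*Real.log (a/b) + 1 - a/b)) := by field_simp; ring
  rw [h1, h2]
  exact mul_le_mul_of_nonneg_left ht (sq_nonneg b)

private lemma stmt9_KLdiv_eq_sum {Z : Type*} [Fintype Z] (α β : Z → ℝ) :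
    KLdiv α β = ∑ z, ((β z - α z) + α z * Real.log (α z / β z)) := by
  rw [KLdiv, Finset.sum_add_distrib]

private lemma stmt9_KLdiv_nonneg {Z : Type*} [Fintype Z] (α β : Z → ℝ)
    (hα : ∀ z, 0 < α z) (hβ : ∀ z, 0 < β z) : 0 ≤ KLdiv α β := by
  rw [stmt9_KLdiv_eq_sum]
  refine Finset.sum_nonneg fun z _ => ?_
  have := stmt9_key2 (hα z) (hβ z)
  nlinarith [sq_nonneg (α z - β z), hα z, hβ z]

private lemma stmt9_pinsker {Z : Type*} [Fintype Z] [Nonempty Z] (α β : Z → ℝ)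
    (hα : ∀ z, 0 < α z) (hβ : ∀ z, 0 < β z)
    (hD : KLdiv α β ≤ ∑ z, α z) :
    (∑ z, |α z - β z|)^2 ≤ 7 * (∑ z, α z) * KLdiv α β := by
  set a := ∑ z, α z with ha_def
  set b := ∑ z, β z with hb_def
  set D := KLdiv α β with hD_def
  set T := ∑ z, |α z - β z| with hT_def
  have ha : 0 < a := Finset.sum_pos (fun z _ => hα z) Finset.univ_nonempty
  have hb : 0 < b := Finset.sum_pos (fun z _ => hβ z) Finset.univ_nonempty
  have hT0 : 0 ≤ T := Finset.sum_nonneg (fun z _ => abs_nonneg _)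
  have hDnn : 0 ≤ D := stmt9_KLdiv_nonneg α β hα hβ
  have hCS : T^2 ≤ (∑ z, (2*α z + 4*β z)) * ∑ z, (α z - β z)^2 / (2*α z + 4*β z) := by
    have := Finset.sum_mul_sq_le_sq_mul_sq Finset.univ
      (fun z => Real.sqrt (2*α z + 4*β z))
      (fun z => |α z - β z| / Real.sqrt (2*α z + 4*β z))
    have heq : ∀ z : Z, Real.sqrt (2*α z + 4*β z) * (|α z - β z| / Real.sqrt (2*α z + 4*β z))
        = |α z - β z| := by
      intro z
      have hw : (0:ℝ) < 2*α z + 4*β z := by nlinarith [hα z, hβ z]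
      field_simp [Real.sqrt_ne_zero'.mpr hw]
    calc T^2 = (∑ z, Real.sqrt (2*α z + 4*β z)
          * (|α z - β z| / Real.sqrt (2*α z + 4*β z)))^2 := by
          rw [hT_def]; congr 1; exact (Finset.sum_congr rfl fun z _ => (heq z)).symm
      _ ≤ (∑ z, Real.sqrt (2*α z + 4*β z)^2)
          * ∑ z, (|α z - β z| / Real.sqrt (2*α z + 4*β z))^2 := this
      _ = (∑ z, (2*α z + 4*β z)) * ∑ z, (α z - β z)^2 / (2*α z + 4*β z) := by
          congr 1
          · exact Finset.sum_congr rfl fun z _ => Real.sq_sqrt (by nlinarith [hα z, hβ z])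
          · refine Finset.sum_congr rfl fun z _ => ?_
            have hw : (0:ℝ) < 2*α z + 4*β z := by nlinarith [hα z, hβ z]
            rw [div_pow, Real.sq_sqrt hw.le, sq_abs]
  have hsum_w : (∑ z, (2*α z + 4*β z)) = 2*a + 4*b := by
    rw [ha_def, hb_def, Finset.sum_add_distrib, ← Finset.mul_sum, ← Finset.mul_sum]
  have hchi : ∑ z, (α z - β z)^2 / (2*α z + 4*β z) ≤ D / 3 := by
    rw [hD_def, stmt9_KLdiv_eq_sum, Finset.sum_div]
    refine Finset.sum_le_sum fun z _ => ?_
    have hw : (0:ℝ) < 2*α z + 4*β z := by nlinarith [hα z, hβ z]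
    rw [div_le_div_iff₀ hw (by norm_num : (0:ℝ) < 3)]
    have := stmt9_key2 (hα z) (hβ z)
    nlinarith [this]
  have h1 : 3 * T^2 ≤ (2*a + 4*b) * D := by
    have h2 : T^2 ≤ (2*a+4*b) * (D/3) := by
      calc T^2 ≤ (∑ z, (2*α z + 4*β z)) * ∑ z, (α z - β z)^2 / (2*α z + 4*β z) := hCS
        _ ≤ (2*a+4*b) * (D/3) := by
            rw [hsum_w]
            exact mul_le_mul_of_nonneg_left hchi (by nlinarith)
    linarith
  have h2 : |a - b| ≤ T := by
    rw [ha_def, hb_def, hT_def, ← Finset.sum_sub_distrib]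
    exact Finset.abs_sum_le_sum_abs _ _
  have h3 : (a-b)^2 ≤ T^2 := by
    rw [← sq_abs (a-b)]
    exact pow_le_pow_left₀ (abs_nonneg _) h2 2
  nlinarith [h1, h3, hD, ha, hb, hDnn, hT0, sq_nonneg T, mul_nonneg hDnn hb.le,
    mul_nonneg hDnn ha.le, sq_nonneg (a-b), mul_nonneg (mul_nonneg hDnn hb.le) hb.le]

/-! ### Structural lemmas for the Sinkhorn objective -/

variable {K : ℕ} {𝒳 : Fin K → Type*} [∀ i, Fintype (𝒳 i)] [∀ i, DecidableEq (𝒳 i)]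

private lemma stmt9_piInd_nonneg (η : ℝ)
    (c : (A : Finset (Fin K)) → ((j : A) → 𝒳 j.1) → ℝ≥0∞)
    (g : (i : Fin K) → 𝒳 i → ℝ) (A : Finset (Fin K)) (x : (j : A) → 𝒳 j.1) :
    0 ≤ piInd 𝒳 η c g A x := by
  unfold piInd
  split
  · exact le_refl _
  · exact (Real.exp_pos _).le

private lemma stmt9_marg_nonneg (A : Finset (Fin K)) (π : ((j : A) → 𝒳 j.1) → ℝ)
    (hπ : ∀ x, 0 ≤ π x) (i : Fin K) (xi : 𝒳 i) : 0 ≤ marg 𝒳 A π i xi := by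
  unfold marg
  split
  · exact Finset.sum_nonneg fun x _ => by split <;> [exact hπ x; exact le_refl 0]
  · exact le_refl _

private lemma stmt9_singleton_mem_SKLi {L : ℕ} (hL : 1 ≤ L) (i : Fin K) :
    ({i} : Finset (Fin K)) ∈ SKLi K L i := by
  unfold SKLi SKL
  simp only [Finset.mem_filter, Finset.mem_univ, true_and]
  exact ⟨⟨Finset.singleton_nonempty i, by simpa using hL⟩, Finset.mem_singleton_self i⟩

private lemma stmt9_totMarg_pos {L : ℕ} (hL : 1 ≤ L) (η : ℝ)
    (c : (A : Finset (Fin K)) → ((j : A) → 𝒳 j.1) → ℝ≥0∞)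
    (hc : ∀ (i : Fin K) (x : (j : ({i} : Finset (Fin K))) → 𝒳 j.1), c {i} x = 0)
    (g : (i : Fin K) → 𝒳 i → ℝ) (i : Fin K) (xi : 𝒳 i) :
    0 < totMarg 𝒳 L (piInd 𝒳 η c g) i xi := by
  unfold totMarg
  refine Finset.sum_pos'
    (fun A _ => stmt9_marg_nonneg A _ (stmt9_piInd_nonneg η c g A) i xi) ?_
  refine ⟨{i}, stmt9_singleton_mem_SKLi hL i, ?_⟩
  have hi : i ∈ ({i} : Finset (Fin K)) := Finset.mem_singleton_self i
  unfold marg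
  rw [dif_pos hi]
  set x₀ : (j : ({i} : Finset (Fin K))) → 𝒳 j.1 :=
    fun j => cast (congrArg 𝒳 (Finset.mem_singleton.mp j.2).symm) xi with hx₀
  refine Finset.sum_pos'
    (fun x _ => by split <;> [exact stmt9_piInd_nonneg η c g _ x; exact le_refl 0]) ?_
  refine ⟨x₀, Finset.mem_univ _, ?_⟩
  have hx : x₀ ⟨i, hi⟩ = xi := rfl
  rw [if_pos hx]
  unfold piInd
  rw [if_neg (by rw [hc i x₀]; exact ENNReal.zero_ne_top)]
  exact Real.exp_pos _

private lemma stmt9_marg_mul (A : Finset (Fin K)) (π : ((j : A) → 𝒳 j.1) → ℝ)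
    (i : Fin K) (hi : i ∈ A) (f : 𝒳 i → ℝ) :
    ∑ xi : 𝒳 i, marg 𝒳 A π i xi * f xi
      = ∑ x : (j : A) → 𝒳 j.1, π x * f (x ⟨i, hi⟩) := by
  unfold marg
  simp only [dif_pos hi]
  simp only [Finset.sum_mul, ite_mul, zero_mul]
  rw [Finset.sum_comm]
  refine Finset.sum_congr rfl fun x _ => ?_
  rw [Finset.sum_ite_eq]
  simp

private lemma stmt9_dual_diff {L : ℕ} (hL : 1 ≤ L) {η : ℝ} (hη : 0 < η)
    (c : (A : Finset (Fin K)) → ((j : A) → 𝒳 j.1) → ℝ≥0∞)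
    (hc : ∀ (i : Fin K) (x : (j : ({i} : Finset (Fin K))) → 𝒳 j.1), c {i} x = 0)
    (μ : (i : Fin K) → 𝒳 i → ℝ) (hμpos : ∀ i xi, 0 < μ i xi)
    (g0 g1 : (i : Fin K) → 𝒳 i → ℝ) (I : Fin K)
    (hupd : ∀ xI : 𝒳 I, g1 I xI = g0 I xI + η * Real.log (μ I xI)
        - η * Real.log (totMarg 𝒳 L (piInd 𝒳 η c g0) I xI))
    (hfix : ∀ i : Fin K, i ≠ I → g1 i = g0 i) :
    dualObj 𝒳 η L c μ g0 - dualObj 𝒳 η L c μ g1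
      = KLdiv (μ I) (totMarg 𝒳 L (piInd 𝒳 η c g0) I) := by
  set m := totMarg 𝒳 L (piInd 𝒳 η c g0) I with hm_def
  have hm : ∀ xi, 0 < m xi := fun xi => stmt9_totMarg_pos hL η c hc g0 I xi
  have hpi : ∀ (A : Finset (Fin K)) (hi : I ∈ A) (x : (j : A) → 𝒳 j.1),
      piInd 𝒳 η c g1 A x = piInd 𝒳 η c g0 A x * (μ I (x ⟨I, hi⟩) / m (x ⟨I, hi⟩)) := by
    intro A hi x
    have hsum : (∑ j : A, g1 j.1 (x j)) = (∑ j : A, g0 j.1 (x j))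
        + (η * Real.log (μ I (x ⟨I, hi⟩)) - η * Real.log (m (x ⟨I, hi⟩))) := by
      have hdiff : (∑ j : A, (g1 j.1 (x j) - g0 j.1 (x j)))
          = η * Real.log (μ I (x ⟨I, hi⟩)) - η * Real.log (m (x ⟨I, hi⟩)) := by
        rw [Fintype.sum_eq_single (⟨I, hi⟩ : A)]
        · rw [hupd]; ring
        · intro j hj
          have hj' : j.1 ≠ I := fun h => hj (Subtype.ext h)
          rw [hfix j.1 hj']; ring
      rw [Finset.sum_sub_distrib] at hdiff; linarith
    unfold piInd
    split
    · rw [zero_mul]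
    · rw [hsum, show ((∑ j : A, g0 j.1 (x j))
          + (η * Real.log (μ I (x ⟨I, hi⟩)) - η * Real.log (m (x ⟨I, hi⟩)))
          - (1 + (c A x).toReal)) / η
          = ((∑ j : A, g0 j.1 (x j)) - (1 + (c A x).toReal)) / η
            + (Real.log (μ I (x ⟨I, hi⟩)) - Real.log (m (x ⟨I, hi⟩))) from by
        field_simp; ring]
      rw [Real.exp_add, Real.exp_sub, Real.exp_log (hμpos I _), Real.exp_log (hm _)]
  have hpi0 : ∀ (A : Finset (Fin K)), I ∉ A → ∀ x : (j : A) → 𝒳 j.1,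
      piInd 𝒳 η c g1 A x = piInd 𝒳 η c g0 A x := by
    intro A hA x
    unfold piInd
    have hs : (∑ j : A, g1 j.1 (x j)) = ∑ j : A, g0 j.1 (x j) :=
      Finset.sum_congr rfl fun j _ => by rw [hfix j.1 (fun h => hA (h ▸ j.2))]
    rw [hs]
  have hpot : (∑ i : Fin K, ∑ xi : 𝒳 i, g0 i xi * μ i xi)
      - (∑ i : Fin K, ∑ xi : 𝒳 i, g1 i xi * μ i xi)
      = ∑ xi : 𝒳 I, (η * Real.log (m xi) - η * Real.log (μ I xi)) * μ I xi := by
    rw [← Finset.sum_sub_distrib, Fintype.sum_eq_single I]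
    · rw [← Finset.sum_sub_distrib]
      refine Finset.sum_congr rfl fun xi _ => ?_
      rw [hupd xi]; ring
    · intro i hi
      rw [hfix i hi, sub_self]
  have hcoup : (∑ A ∈ SKL K L, ∑ x : (j : A) → 𝒳 j.1, piInd 𝒳 η c g0 A x)
      - (∑ A ∈ SKL K L, ∑ x : (j : A) → 𝒳 j.1, piInd 𝒳 η c g1 A x)
      = ∑ xi : 𝒳 I, (m xi - μ I xi) := by
    rw [← Finset.sum_sub_distrib,
      ← Finset.sum_filter_add_sum_filter_not (SKL K L) (fun A => I ∈ A)]
    have hz : (∑ A ∈ (SKL K L).filter (fun A => ¬ I ∈ A),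
        ((∑ x : (j : A) → 𝒳 j.1, piInd 𝒳 η c g0 A x)
          - (∑ x : (j : A) → 𝒳 j.1, piInd 𝒳 η c g1 A x))) = 0 := by
      refine Finset.sum_eq_zero fun A hA => ?_
      have hA' : I ∉ A := (Finset.mem_filter.mp hA).2
      rw [Finset.sum_congr rfl fun x _ => hpi0 A hA' x, sub_self]
    rw [hz, add_zero]
    have hstep : ∀ A ∈ (SKL K L).filter (fun A => I ∈ A),
        (∑ x : (j : A) → 𝒳 j.1, piInd 𝒳 η c g0 A x)
          - (∑ x : (j : A) → 𝒳 j.1, piInd 𝒳 η c g1 A x)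
        = ∑ xi : 𝒳 I, marg 𝒳 A (piInd 𝒳 η c g0 A) I xi * (1 - μ I xi / m xi) := by
      intro A hA
      have hi : I ∈ A := (Finset.mem_filter.mp hA).2
      rw [stmt9_marg_mul A _ I hi (fun xi => 1 - μ I xi / m xi), ← Finset.sum_sub_distrib]
      refine Finset.sum_congr rfl fun x _ => ?_
      rw [hpi A hi x]; ring
    rw [Finset.sum_congr rfl hstep, Finset.sum_comm]
    refine Finset.sum_congr rfl fun xi _ => ?_
    rw [← Finset.sum_mul]
    have hmm : (∑ A ∈ (SKL K L).filter (fun A => I ∈ A),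
        marg 𝒳 A (piInd 𝒳 η c g0 A) I xi) = m xi := rfl
    rw [hmm]
    have := (hm xi).ne'
    field_simp
  have e1 : dualObj 𝒳 η L c μ g0 - dualObj 𝒳 η L c μ g1
      = ((∑ A ∈ SKL K L, ∑ x : (j : A) → 𝒳 j.1, piInd 𝒳 η c g0 A x)
          - (∑ A ∈ SKL K L, ∑ x : (j : A) → 𝒳 j.1, piInd 𝒳 η c g1 A x))
        - (1/η) * ((∑ i : Fin K, ∑ xi : 𝒳 i, g0 i xi * μ i xi)
          - (∑ i : Fin K, ∑ xi : 𝒳 i, g1 i xi * μ i xi)) := by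
    unfold dualObj; ring
  rw [e1, hcoup, hpot]
  have e2 : (1/η) * (∑ xi : 𝒳 I, (η * Real.log (m xi) - η * Real.log (μ I xi)) * μ I xi)
      = ∑ xi : 𝒳 I, (Real.log (m xi) - Real.log (μ I xi)) * μ I xi := by
    rw [Finset.mul_sum]
    refine Finset.sum_congr rfl fun xi _ => ?_
    field_simp
  rw [e2]
  unfold KLdiv
  have e3 : (∑ xi : 𝒳 I, μ I xi * Real.log (μ I xi / m xi))
      = - ∑ xi : 𝒳 I, (Real.log (m xi) - Real.log (μ I xi)) * μ I xi := by
    rw [← Finset.sum_neg_distrib]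
    refine Finset.sum_congr rfl fun xi _ => ?_
    rw [Real.log_div (hμpos I xi).ne' (hm xi).ne']; ring
  rw [e3]; ring

end StmtAux

/-- along the greedy Sinkhorn iteration, if at iterate `t` all the
KL-discrepancies are at most `‖μᵢ‖₁`, then
`𝒢^L(gᵗ) − 𝒢^L(g^{t+1}) ≥ (1/7)(E_t/K)²`; otherwise
`𝒢^L(gᵗ) − 𝒢^L(g^{t+1}) ≥ minⱼ ‖μⱼ‖₁`. -/
theorem stmt9 (K L : ℕ) (hK : 0 < K) (hL : 1 ≤ L) (hLK : L ≤ K)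
    (𝒳 : Fin K → Type*) [∀ i, Fintype (𝒳 i)] [∀ i, DecidableEq (𝒳 i)]
    [∀ i, Nonempty (𝒳 i)]
    (η : ℝ) (hη : 0 < η)
    (c : (A : Finset (Fin K)) → ((j : A) → 𝒳 j.1) → ℝ≥0∞)
    (hc : ∀ (i : Fin K) (x : (j : ({i} : Finset (Fin K))) → 𝒳 j.1), c {i} x = 0)
    (μ : (i : Fin K) → 𝒳 i → ℝ) (hμpos : ∀ i xi, 0 < μ i xi)
    (hmass : ∑ i : Fin K, ∑ xi : 𝒳 i, μ i xi = 1)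
    (g : ℕ → (i : Fin K) → 𝒳 i → ℝ)
    (hg : IsGreedySinkhorn 𝒳 η L c μ g) (t : ℕ) :
    ((∀ i : Fin K,
        KLdiv (μ i) (totMarg 𝒳 L (piInd 𝒳 η c (g t)) i) ≤ l1 (μ i)) →
      dualObj 𝒳 η L c μ (g t) - dualObj 𝒳 η L c μ (g (t + 1)) ≥
        (1 / 7) * (Err 𝒳 η L c μ g t / K) ^ 2) ∧
    ((∃ i : Fin K,
        l1 (μ i) < KLdiv (μ i) (totMarg 𝒳 L (piInd 𝒳 η c (g t)) i)) →
      dualObj 𝒳 η L c μ (g t) - dualObj 𝒳 η L c μ (g (t + 1)) ≥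
        sInf {v : ℝ | ∃ j : Fin K, v = l1 (μ j)}) := by
  obtain ⟨hg0, hgstep⟩ := hg
  obtain ⟨I, hmax, hupd, hfix⟩ := hgstep t
  have hdd := stmt9_dual_diff hL hη c hc μ hμpos (g t) (g (t+1)) I hupd hfix
  have hmpos : ∀ (i : Fin K) (xi : 𝒳 i), 0 < totMarg 𝒳 L (piInd 𝒳 η c (g t)) i xi :=
    fun i xi => stmt9_totMarg_pos hL η c hc (g t) i xi
  have hl1 : ∀ i : Fin K, l1 (μ i) = ∑ xi : 𝒳 i, μ i xi := fun i =>
    Finset.sum_congr rfl fun xi _ => abs_of_pos (hμpos i xi)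
  have hl1nn : ∀ i : Fin K, 0 ≤ l1 (μ i) := fun i =>
    Finset.sum_nonneg fun xi _ => abs_nonneg _
  have hle1 : ∀ i : Fin K, l1 (μ i) ≤ 1 := by
    intro i
    rw [hl1 i, ← hmass]
    exact Finset.single_le_sum
      (f := fun j : Fin K => ∑ xj : 𝒳 j, μ j xj)
      (fun j _ => Finset.sum_nonneg fun xj _ => (hμpos j xj).le) (Finset.mem_univ i)
  have hDI_nn : 0 ≤ KLdiv (μ I) (totMarg 𝒳 L (piInd 𝒳 η c (g t)) I) :=
    stmt9_KLdiv_nonneg _ _ (hμpos I) (hmpos I)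
  constructor
  · intro hsmall
    rw [ge_iff_le, hdd]
    set DI := KLdiv (μ I) (totMarg 𝒳 L (piInd 𝒳 η c (g t)) I) with hDI_def
    have h7 : (0:ℝ) ≤ 7 * DI := by linarith
    have hTi : ∀ i : Fin K,
        l1 (fun xi : 𝒳 i => μ i xi - totMarg 𝒳 L (piInd 𝒳 η c (g t)) i xi)
          ≤ Real.sqrt (7 * DI) := by
      intro i
      have hp := stmt9_pinsker (μ i) (totMarg 𝒳 L (piInd 𝒳 η c (g t)) i)
        (hμpos i) (hmpos i) (by rw [← hl1 i]; exact hsmall i)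
      have hDi_nn : 0 ≤ KLdiv (μ i) (totMarg 𝒳 L (piInd 𝒳 η c (g t)) i) :=
        stmt9_KLdiv_nonneg _ _ (hμpos i) (hmpos i)
      have hsq : (l1 (fun xi : 𝒳 i => μ i xi - totMarg 𝒳 L (piInd 𝒳 η c (g t)) i xi))^2
          ≤ 7 * DI := by
        have h1 : (∑ xi : 𝒳 i, |μ i xi - totMarg 𝒳 L (piInd 𝒳 η c (g t)) i xi|)^2
            ≤ 7 * (∑ xi : 𝒳 i, μ i xi) * KLdiv (μ i) (totMarg 𝒳 L (piInd 𝒳 η c (g t)) i) :=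
          hp
        have h2 : 7 * (∑ xi : 𝒳 i, μ i xi) * KLdiv (μ i) (totMarg 𝒳 L (piInd 𝒳 η c (g t)) i)
            ≤ 7 * DI := by
          have hmu1 : (∑ xi : 𝒳 i, μ i xi) ≤ 1 := by rw [← hl1 i]; exact hle1 i
          have hmu0 : 0 ≤ (∑ xi : 𝒳 i, μ i xi) :=
            Finset.sum_nonneg fun xi _ => (hμpos i xi).le
          have hDle : KLdiv (μ i) (totMarg 𝒳 L (piInd 𝒳 η c (g t)) i) ≤ DI := hmax i
          nlinarith
        exact le_trans h1 h2
      calc l1 (fun xi : 𝒳 i => μ i xi - totMarg 𝒳 L (piInd 𝒳 η c (g t)) i xi)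
          = Real.sqrt ((l1 (fun xi : 𝒳 i => μ i xi
              - totMarg 𝒳 L (piInd 𝒳 η c (g t)) i xi))^2) :=
            (Real.sqrt_sq (Finset.sum_nonneg fun xi _ => abs_nonneg _)).symm
        _ ≤ Real.sqrt (7 * DI) := Real.sqrt_le_sqrt hsq
    have hE : Err 𝒳 η L c μ g t ≤ K * Real.sqrt (7 * DI) := by
      unfold Err
      calc (∑ i : Fin K, l1 (fun xi : 𝒳 i => μ i xi - totMarg 𝒳 L (piInd 𝒳 η c (g t)) i xi))
          ≤ ∑ _i : Fin K, Real.sqrt (7 * DI) := Finset.sum_le_sum fun i _ => hTi i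
        _ = K * Real.sqrt (7 * DI) := by
            rw [Finset.sum_const, Finset.card_univ, Fintype.card_fin, nsmul_eq_mul]
    have hEnn : 0 ≤ Err 𝒳 η L c μ g t :=
      Finset.sum_nonneg fun i _ => Finset.sum_nonneg fun xi _ => abs_nonneg _
    have hKpos : (0:ℝ) < K := by exact_mod_cast hK
    have hEK : Err 𝒳 η L c μ g t / K ≤ Real.sqrt (7 * DI) := by
      rw [div_le_iff₀ hKpos]
      calc Err 𝒳 η L c μ g t ≤ K * Real.sqrt (7 * DI) := hE
        _ = Real.sqrt (7 * DI) * K := by ring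
    have hsq2 : (Err 𝒳 η L c μ g t / K)^2 ≤ 7 * DI := by
      calc (Err 𝒳 η L c μ g t / K)^2 ≤ (Real.sqrt (7 * DI))^2 :=
            pow_le_pow_left₀ (by positivity) hEK 2
        _ = 7 * DI := Real.sq_sqrt h7
    linarith
  · rintro ⟨i, hbig⟩
    rw [ge_iff_le, hdd]
    have h2 : sInf {v : ℝ | ∃ j : Fin K, v = l1 (μ j)} ≤ l1 (μ i) := by
      have hset : {v : ℝ | ∃ j : Fin K, v = l1 (μ j)}
          = Set.range (fun j : Fin K => l1 (μ j)) := by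
        ext v; simp [eq_comm]
      rw [hset]
      exact csInf_le (Set.finite_range _).bddBelow ⟨i, rfl⟩
    have h3 : l1 (μ i) < KLdiv (μ I) (totMarg 𝒳 L (piInd 𝒳 η c (g t)) I) :=
      lt_of_lt_of_le hbig (hmax i)
    linarith


end
end

section
/- Let A, B, δ' > 0 and let a₁ > a₂ > … > a_T be a finite decreasing sequence of positive real numbers satisfying a_t − a_{t+1} ≥ max{ B(δ')², A·a_t² } for every 1 ≤ t ≤ T−1. Then for every real h with h ≥ a_T, it holds that T ≤ 2 + 1/(A·h) + h/(B(δ')²). -/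
/-- Let `A, B, δ' > 0` and let `a₁ > a₂ > … > a_T` be a finite decreasing sequence of
positive reals with `a_t − a_{t+1} ≥ max {B δ'², A a_t²}` for `1 ≤ t ≤ T − 1`.
Then for every real `h ≥ a_T`, `T ≤ 2 + 1/(A h) + h/(B δ'²)`. -/
theorem stmt14 (A B δ' : ℝ) (hA : 0 < A) (hB : 0 < B) (hδ' : 0 < δ')
    (T : ℕ) (hT : 1 ≤ T) (a : ℕ → ℝ)
    (hpos : ∀ t, 1 ≤ t → t ≤ T → 0 < a t)
    (hdec : ∀ t, 1 ≤ t → t + 1 ≤ T → a (t + 1) < a t)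
    (hgap : ∀ t, 1 ≤ t → t + 1 ≤ T → a t - a (t + 1) ≥ max (B * δ' ^ 2) (A * a t ^ 2)) :
    ∀ h : ℝ, a T ≤ h → (T : ℝ) ≤ 2 + 1 / (A * h) + h / (B * δ' ^ 2) := by
  classical
  intro h hh
  have hTpos := hpos T hT le_rfl
  have hhpos : 0 < h := lt_of_lt_of_le hTpos hh
  have hBd : 0 < B * δ' ^ 2 := by positivity
  -- inverse chain
  have inv_step : ∀ t, 1 ≤ t → t + 1 ≤ T → (a t)⁻¹ + A ≤ (a (t + 1))⁻¹ := by
    intro t h1 h2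
    have hg := le_trans (le_max_right _ _) (hgap t h1 h2)
    have hp1 := hpos t h1 (by omega)
    have hp2 := hpos (t+1) (by omega) h2
    have hd := hdec t h1 h2
    rw [← sub_nonneg]
    have e : (a (t+1))⁻¹ - ((a t)⁻¹ + A) = (a t - a (t+1) - A * (a t * a (t+1))) / (a t * a (t+1)) := by
      field_simp; ring
    rw [e]
    apply div_nonneg _ (le_of_lt (mul_pos hp1 hp2))
    nlinarith [mul_pos hp1 hp2]
  have inv_chain : ∀ t, 1 ≤ t → t ≤ T → A * ((t : ℝ) - 1) ≤ (a t)⁻¹ := by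
    intro t h1
    induction t with
    | zero => omega
    | succ n ih =>
      intro hle
      rcases Nat.eq_or_lt_of_le h1 with h1' | h1'
      · obtain rfl : n = 0 := by omega
        have hp := hpos 1 le_rfl hle
        norm_num
        exact hp.le
      · have hn1 : 1 ≤ n := by omega
        have := inv_step n hn1 hle
        have ihn := ih hn1 (by omega)
        push_cast
        nlinarith
  -- gap chain (downward)
  have gap_chain : ∀ d, d ≤ T - 1 → (d : ℝ) * (B * δ' ^ 2) ≤ a (T - d) - a T := by
    intro d
    induction d with
    | zero => intro _; simp
    | succ n ih =>
      intro hle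
      have ht1 : 1 ≤ T - (n + 1) := by omega
      have ht2 : T - (n + 1) + 1 ≤ T := by omega
      have hg := le_trans (le_max_left _ _) (hgap (T - (n+1)) ht1 ht2)
      have heq : T - (n + 1) + 1 = T - n := by omega
      rw [heq] at hg
      have ihn := ih (by omega)
      push_cast
      nlinarith
  -- case split on a 1 ≤ h
  by_cases hc : a 1 ≤ h
  · -- whole drop bounded by h
    have hg := gap_chain (T - 1) le_rfl
    have heq : T - (T - 1) = 1 := by omega
    rw [heq] at hg
    have hcast : ((T - 1 : ℕ) : ℝ) = (T : ℝ) - 1 := by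
      push_cast [Nat.cast_sub hT]; ring
    rw [hcast] at hg
    have h1 : (T : ℝ) - 1 ≤ h / (B * δ' ^ 2) := by
      rw [le_div_iff₀ hBd]
      nlinarith
    have h2 : 0 ≤ 1 / (A * h) := by positivity
    linarith
  · push_neg at hc
    set P : ℕ → Prop := fun t => 1 ≤ t ∧ t ≤ T ∧ h < a t with hP
    set m := Nat.findGreatest P T with hm
    have hP1 : P 1 := ⟨le_rfl, hT, hc⟩
    have hm1 : 1 ≤ m := Nat.le_findGreatest hT hP1
    have hPm : P m := Nat.findGreatest_spec hT hP1
    have hmT : m ≤ T := hPm.2.1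
    have hmlt : m < T := by
      rcases Nat.eq_or_lt_of_le hmT with h' | h'
      · exfalso; exact absurd hh (not_le.mpr (h' ▸ hPm.2.2))
      · exact h'
    have hnext : ¬ P (m + 1) := Nat.findGreatest_is_greatest (n := T) (by omega) (by omega)
    have ham1 : a (m + 1) ≤ h := by
      by_contra hcon
      exact hnext ⟨by omega, by omega, not_le.mp hcon⟩
    -- bound m
    have hi := inv_chain m hm1 hmT
    have ham : h < a m := hPm.2.2
    have hb1 : (m : ℝ) - 1 ≤ 1 / (A * h) := by
      rw [le_div_iff₀ (by positivity)]
      have : (a m)⁻¹ ≤ h⁻¹ := by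
        apply inv_anti₀ hhpos (le_of_lt ham)
      have hinv : h * h⁻¹ = 1 := mul_inv_cancel₀ (ne_of_gt hhpos)
      nlinarith [inv_pos.mpr hhpos]
    -- bound T - (m+1)
    have hd : T - (m + 1) ≤ T - 1 := by omega
    have hg2 := gap_chain (T - (m + 1)) hd
    have heq2 : T - (T - (m + 1)) = m + 1 := by omega
    rw [heq2] at hg2
    have hcast : ((T - (m + 1) : ℕ) : ℝ) = (T : ℝ) - (m + 1) := by
      push_cast [Nat.cast_sub (by omega : m + 1 ≤ T)]; ring
    rw [hcast] at hg2
    have hb2 : (T : ℝ) - (m + 1) ≤ h / (B * δ' ^ 2) := by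
      rw [le_div_iff₀ hBd]
      nlinarith
    linarith
end
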